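/- Let p be an odd prime, t an even positive integer, and c ∈ F_p. In the Laurent polynomial B(x) = (1/2)((x + x⁻¹ + c)^t - (x + x⁻¹ - c)^t) over F_p, the coefficient of x^{t-3} equals t·c·(t-1) + C(t,3)·c³, where C(t,3) is the binomial coefficient reduced mod p. -/

import Mathlib

open LaurentPolynomial

lemma tl_coeff {R : Type*} [Semiring R] (f : Polynomial R) (n : ℕ) :
    (Polynomial.toLaurent f).coeff (n : ℤ) = f.coeff n := by
  rw [LaurentPolynomial.coeff_toLaurent]
  exact Finsupp.mapDomain_apply Nat.castEmbedding.injective _ _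

lemma key {R : Type*} [CommRing R] (c : R) :
    (T 1 + T (-1) + LaurentPolynomial.C c : LaurentPolynomial R)
      = Polynomial.toLaurent (Polynomial.C c * Polynomial.X + (Polynomial.X ^ 2 + 1)) * T (-1) := by
  rw [map_add, map_add, map_mul, Polynomial.toLaurent_C, Polynomial.toLaurent_X, map_pow,
    Polynomial.toLaurent_X, map_one, T_pow]
  rw [add_mul, add_mul, mul_assoc, ← T_add, ← T_add]
  norm_num
  ring

lemma shifted_coeff {R : Type*} [CommRing R] (f : Polynomial R) (t : ℕ) (h2 : 2 ≤ t) :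
    ((Polynomial.toLaurent f * T (-1)) ^ t : LaurentPolynomial R).coeff ((t : ℤ) - 3)
      = (f ^ t).coeff (2 * t - 3) := by
  rw [mul_pow, T_pow, ← map_pow]
  have h : ((Polynomial.toLaurent (f ^ t) * T ((t : ℤ) * (-1)) : LaurentPolynomial R).coeff ((t : ℤ) - 3))
      = (Polynomial.toLaurent (f ^ t)).coeff (((t : ℤ) - 3) - ((t : ℤ) * (-1))) * 1 :=
    AddMonoidAlgebra.coeff_mul_single_apply _ _ _ _
  rw [h, mul_one, show ((t : ℤ) - 3) - ((t : ℤ) * (-1)) = ((2 * t - 3 : ℕ) : ℤ) by push_cast; omega,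
    tl_coeff]

open Polynomial

lemma poly_coeff {R : Type*} [CommRing R] (c : R) (t : ℕ) (h2 : 2 ≤ t) :
    ((Polynomial.C c * X + (X ^ 2 + 1) : R[X]) ^ t).coeff (2 * t - 3)
      = (t : R) * ((t : R) - 1) * c + (t.choose 3 : R) * c ^ 3 := by
  set N := 2 * t - 3 with hN
  have hexp : ∀ m : ℕ, ((X ^ 2 + 1 : R[X]) ^ m) = Polynomial.expand R 2 ((X + 1) ^ m) := by
    intro m
    rw [map_pow, map_add, Polynomial.expand_X, map_one]
  rw [add_pow, Polynomial.finset_sum_coeff]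
  have hterm : ∀ k ∈ Finset.range (t + 1),
      ((Polynomial.C c * X) ^ k * (X ^ 2 + 1) ^ (t - k) * (t.choose k : R[X])).coeff N
        = (if k = 1 then (t : R) * ((t : R) - 1) * c else 0)
          + (if k = 3 then (t.choose 3 : R) * c ^ 3 else 0) := by
    intro k hk
    rw [Finset.mem_range] at hk
    have hkt : k ≤ t := by omega
    have h1 : (Polynomial.C c * X) ^ k * (X ^ 2 + 1) ^ (t - k) * (t.choose k : R[X])
        = Polynomial.C (c ^ k * (t.choose k : R)) * ((X ^ 2 + 1) ^ (t - k) * X ^ k) := by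
      rw [mul_pow, ← Polynomial.C_pow, ← Polynomial.C_eq_natCast, Polynomial.C_mul]
      ring
    rw [h1, Polynomial.coeff_C_mul, Polynomial.coeff_mul_X_pow', hexp]
    by_cases hkN : k ≤ N
    · rw [if_pos hkN, Polynomial.coeff_expand (by norm_num)]
      by_cases hdvd : 2 ∣ N - k
      · rw [if_pos hdvd, Polynomial.coeff_X_add_one_pow]
        -- k is even impossible; analyze k
        have hkodd : k % 2 = 1 := by omega
        by_cases hk1 : k = 1
        · subst hk1
          have e1 : (N - 1) / 2 = t - 2 := by omega
          have e2 : (t - 1).choose (t - 2) = t - 1 := by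
            rw [show t - 2 = (t-1) - 1 by omega, Nat.choose_symm (by omega), Nat.choose_one_right]
          rw [e1, e2, if_pos rfl, if_neg (by norm_num : (1:ℕ) ≠ 3), Nat.choose_one_right]
          have : ((t - 1 : ℕ) : R) = (t : R) - 1 := by
            rw [Nat.cast_sub (by omega), Nat.cast_one]
          rw [this]; ring
        · by_cases hk3 : k = 3
          · subst hk3
            have ht3 : 3 ≤ t := by omega
            have e1 : (N - 3) / 2 = t - 3 := by omega
            rw [e1, Nat.choose_self, if_neg (by norm_num : (3:ℕ) ≠ 1), if_pos rfl]
            ring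
          · -- k odd, k ≥ 5
            have hk5 : 5 ≤ k := by omega
            have : (t - k).choose ((N - k) / 2) = 0 := by
              apply Nat.choose_eq_zero_of_lt; omega
            rw [this]
            simp [hk1, hk3]
      · rw [if_neg hdvd]
        have hk1 : k ≠ 1 := by rintro rfl; exact hdvd (by omega)
        have hk3 : k ≠ 3 := by rintro rfl; exact hdvd (by omega)
        simp [hk1, hk3]
    · rw [if_neg hkN]
      have hk1 : k ≠ 1 := by omega
      have hk3 : k ≠ 3 := by omega
      simp [hk1, hk3]
  rw [Finset.sum_congr rfl hterm, Finset.sum_add_distrib,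
    Finset.sum_ite_eq' (Finset.range (t+1)) 1, Finset.sum_ite_eq' (Finset.range (t+1)) 3,
    if_pos (by simp; omega)]
  by_cases ht3 : 3 ≤ t
  · rw [if_pos (by simp; omega)]
  · rw [if_neg (by simp; omega)]
    have : t = 2 := by omega
    subst this
    norm_num

/-- For `p` an odd prime, `t` even positive, and `c ∈ F_p`, the coefficient of `x^(t-3)`
in `B(x) = (1/2)((x + x⁻¹ + c)^t - (x + x⁻¹ - c)^t)` equals `t·c·(t-1) + C(t,3)·c³`. -/
theorem stmt_7 (p t : ℕ) (hp : p.Prime) (hpodd : Odd p) (ht : 0 < t) (hte : Even t)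
    (c : ZMod p) :
    ((2 : ZMod p)⁻¹ • ((T 1 + T (-1) + LaurentPolynomial.C c) ^ t
        - (T 1 + T (-1) - LaurentPolynomial.C c) ^ t) : LaurentPolynomial (ZMod p)).coeff ((t : ℤ) - 3)
      = (t : ZMod p) * c * ((t : ZMod p) - 1) + (Nat.choose t 3 : ZMod p) * c ^ 3 := by
  haveI : Fact p.Prime := ⟨hp⟩
  have h2t : 2 ≤ t := by obtain ⟨r, rfl⟩ := hte; omega
  have hp2 : p ≠ 2 := by rintro rfl; revert hpodd; decide
  have h2 : (2 : ZMod p) ≠ 0 := by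
    haveI : NeZero p := ⟨hp.ne_zero⟩
    intro h
    have : (p : ℕ) ∣ 2 := by
      have := (ZMod.natCast_eq_zero_iff 2 p).mp (by exact_mod_cast h)
      exact this
    have h1 := Nat.le_of_dvd (by norm_num) this
    have h2 := hp.two_le
    omega
  have hminus : (T 1 + T (-1) - LaurentPolynomial.C c : LaurentPolynomial (ZMod p))
      = T 1 + T (-1) + LaurentPolynomial.C (-c) := by rw [map_neg]; ring
  rw [hminus, key, key, AddMonoidAlgebra.coeff_smul_apply, AddMonoidAlgebra.coeff_sub, Finsupp.sub_apply,
    shifted_coeff _ _ h2t, shifted_coeff _ _ h2t, poly_coeff _ _ h2t, poly_coeff _ _ h2t]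
  rw [show (t : ZMod p) * ((t : ZMod p) - 1) * c + (t.choose 3 : ZMod p) * c ^ 3
      - ((t : ZMod p) * ((t : ZMod p) - 1) * (-c) + (t.choose 3 : ZMod p) * (-c) ^ 3)
      = 2 * ((t : ZMod p) * c * ((t : ZMod p) - 1) + (t.choose 3 : ZMod p) * c ^ 3) by ring]
  rw [smul_eq_mul]; exact inv_mul_cancel_left₀ (G₀ := ZMod p) h2 _
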